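/- In the local bulk scaling limit, the k = 1 diagonal overlap satisfies lim_{N→∞} (1/N) · (1/π) f_{N−1}(|√N z_0 + λ|²) e^{−|√N z_0 + λ|²} = (1/π)(1 − |z_0|²) for any fixed λ ∈ ℂ and fixed z_0 ∈ ℂ with |z_0| < 1, where f_p(x) = (p+1)e_p(x) − x e_{p−1}(x) and e_p is the exponential polynomial. -/

import Mathlib

open Filter

/-- Exponential polynomial `e_p(x) = ∑_{k=0}^p x^k/k!` (real argument). -/
noncomputable def epolyR (p : ℕ) (x : ℝ) : ℝ := ∑ k ∈ Finset.range (p + 1), x ^ k / (Nat.factorial k)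

/-- `f_p(x) = (p+1) e_p(x) - x e_{p-1}(x)`, with `e_{-1} = 0`. -/
noncomputable def fpolyR (p : ℕ) (x : ℝ) : ℝ :=
  (p + 1) * epolyR p x - x * ∑ k ∈ Finset.range p, x ^ k / (Nat.factorial k)

/-- Bulk scaling limit of the `k = 1` diagonal overlap:
`lim_N (1/N)(1/π) f_{N-1}(|√N z₀ + λ|²) e^{-|√N z₀ + λ|²} = (1/π)(1-|z₀|²)`. -/

lemma mono_te {t c : ℝ} (ht : 0 ≤ t) (htc : t ≤ c) (hc1 : c ≤ 1) (hc0 : 0 < c) :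
    t * Real.exp (1 - t) ≤ c * Real.exp (1 - c) := by
  have h1 : (t - c) + 1 ≤ Real.exp (t - c) := Real.add_one_le_exp _
  have h2 : t ≤ c * Real.exp (t - c) := by nlinarith
  calc t * Real.exp (1 - t) ≤ (c * Real.exp (t - c)) * Real.exp (1 - t) :=
        mul_le_mul_of_nonneg_right h2 (Real.exp_pos _).le
    _ = c * Real.exp (1 - c) := by
        rw [mul_assoc, ← Real.exp_add]; ring_nf

lemma q_lt_one {c : ℝ} (hc0 : 0 < c) (hc1 : c < 1) : c * Real.exp (1 - c) < 1 := by
  have h1 : (c - 1) + 1 < Real.exp (c - 1) := Real.add_one_lt_exp (by intro h; linarith [sub_eq_zero.mp h])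
  have h2 : Real.exp (c - 1) * Real.exp (1 - c) = 1 := by
    rw [← Real.exp_add]
    norm_num
  nlinarith [Real.exp_pos (1 - c)]

lemma term_bound {x : ℝ} (hx : 0 ≤ x) {n : ℕ} (hn : 1 ≤ n) :
    Real.exp (-x) * (x ^ n / (Nat.factorial n)) ≤ ((x / n) * Real.exp (1 - x / n)) ^ n := by
  have hnpos : (0:ℝ) < n := by exact_mod_cast hn
  have hfac : (0:ℝ) < (Nat.factorial n : ℝ) := by exact_mod_cast Nat.factorial_pos n
  have key : ((n:ℝ) ^ n / Nat.factorial n) ≤ Real.exp n := by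
    calc ((n:ℝ) ^ n / Nat.factorial n) ≤ ∑ i ∈ Finset.range (n+1), (n:ℝ) ^ i / (Nat.factorial i) :=
          Finset.single_le_sum (f := fun i => (n:ℝ) ^ i / (Nat.factorial i))
            (fun i _ => by positivity) (Finset.self_mem_range_succ n)
      _ ≤ Real.exp n := Real.sum_le_exp_of_nonneg hnpos.le _
  have hxn : x ^ n / (Nat.factorial n) ≤ (x / n) ^ n * Real.exp n := by
    have heq : x ^ n / (Nat.factorial n) = (x / n) ^ n * ((n:ℝ) ^ n / Nat.factorial n) := by
      rw [div_pow]
      field_simp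
    rw [heq]
    exact mul_le_mul_of_nonneg_left key (by positivity)
  calc Real.exp (-x) * (x ^ n / (Nat.factorial n))
      ≤ Real.exp (-x) * ((x / n) ^ n * Real.exp n) :=
        mul_le_mul_of_nonneg_left hxn (Real.exp_pos _).le
    _ = ((x / n) * Real.exp (1 - x / n)) ^ n := by
        rw [mul_pow, ← Real.exp_nat_mul, ← mul_assoc, mul_comm (Real.exp (-x)), mul_assoc,
          ← Real.exp_add]
        congr 2
        field_simp
        ring


lemma tail_bound {x c : ℝ} (hx : 0 ≤ x) (hc0 : 0 < c) (hc1 : c < 1) {n : ℕ} (hn : 1 ≤ n)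
    (hxc : x ≤ c * n) :
    ∑' j : ℕ, x ^ (j + n) / (Nat.factorial (j + n))
      ≤ (x ^ n / (Nat.factorial n)) * (1 - c)⁻¹ := by
  have hnpos : (0:ℝ) < n := by exact_mod_cast hn
  have hr0 : 0 ≤ x / (n + 1) := by positivity
  have hrc : x / (n + 1) ≤ c := by
    rw [div_le_iff₀ (by positivity)]
    nlinarith
  have hrlt : x / (n + 1) < 1 := lt_of_le_of_lt hrc hc1
  have hsum1 : Summable (fun j : ℕ => x ^ (j + n) / (Nat.factorial (j + n))) :=
    (summable_nat_add_iff n).2 (Real.summable_pow_div_factorial x)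
  have hsum2 : Summable (fun j : ℕ => (x ^ n / (Nat.factorial n)) * (x / (n + 1)) ^ j) :=
    (summable_geometric_of_lt_one hr0 hrlt).mul_left _
  have hterm : ∀ j : ℕ, x ^ (j + n) / (Nat.factorial (j + n))
      ≤ (x ^ n / (Nat.factorial n)) * (x / (n + 1)) ^ j := by
    intro j
    have hfac : ((Nat.factorial n : ℝ)) * ((n:ℝ) + 1) ^ j ≤ (Nat.factorial (n + j) : ℝ) := by
      exact_mod_cast Nat.factorial_mul_pow_le_factorial
    have h1 : x ^ (j + n) / (Nat.factorial (j + n))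
        ≤ x ^ (j + n) / ((Nat.factorial n : ℝ) * ((n:ℝ) + 1) ^ j) := by
      apply div_le_div_of_nonneg_left (by positivity) (by positivity)
      rw [Nat.add_comm j n]
      exact hfac
    refine h1.trans (le_of_eq ?_)
    rw [pow_add, div_pow]
    field_simp
  calc ∑' j : ℕ, x ^ (j + n) / (Nat.factorial (j + n))
      ≤ ∑' j : ℕ, (x ^ n / (Nat.factorial n)) * (x / (n + 1)) ^ j :=
        Summable.tsum_le_tsum hterm hsum1 hsum2
    _ = (x ^ n / (Nat.factorial n)) * (1 - x / (n + 1))⁻¹ := by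
        rw [tsum_mul_left, tsum_geometric_of_lt_one hr0 hrlt]
    _ ≤ (x ^ n / (Nat.factorial n)) * (1 - c)⁻¹ := by
        apply mul_le_mul_of_nonneg_left _ (by positivity)
        apply inv_anti₀ (by linarith)
        linarith

lemma remainder_eq (x : ℝ) (n : ℕ) :
    Real.exp x - ∑ k ∈ Finset.range n, x ^ k / (Nat.factorial k)
      = ∑' j : ℕ, x ^ (j + n) / (Nat.factorial (j + n)) := by
  have hs := Real.summable_pow_div_factorial x
  have h := Summable.sum_add_tsum_nat_add n hs
  have hex : Real.exp x = ∑' k : ℕ, x ^ k / (Nat.factorial k) := by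
    rw [Real.exp_eq_exp_ℝ, NormedSpace.exp_eq_tsum_div]
  linarith [h]

lemma key_tendsto (x : ℕ → ℝ) (hx : ∀ n, 0 ≤ x n) (a : ℝ) (ha : a < 1)
    (h : Tendsto (fun n => x n / n) atTop (nhds a)) :
    Tendsto (fun n => Real.exp (-(x n)) * ∑ k ∈ Finset.range n, (x n) ^ k / (Nat.factorial k))
      atTop (nhds 1) := by
  have ha0 : 0 ≤ a :=
    ge_of_tendsto' h (fun n => div_nonneg (hx n) (Nat.cast_nonneg n))
  set c : ℝ := (a + 1) / 2 with hc
  have hc0 : 0 < c := by simp [hc]; linarith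
  have hc1 : c < 1 := by simp [hc]; linarith
  have hac : a < c := by simp [hc]; linarith
  set q : ℝ := c * Real.exp (1 - c) with hq
  have hq0 : 0 ≤ q := by positivity
  have hq1 : q < 1 := q_lt_one hc0 hc1
  -- the remainder term
  set g : ℕ → ℝ := fun n => Real.exp (-(x n)) * ∑' j : ℕ, (x n) ^ (j + n) / (Nat.factorial (j + n))
    with hg
  have hg0 : ∀ n, 0 ≤ g n := by
    intro n
    apply mul_nonneg (Real.exp_pos _).le
    apply tsum_nonneg
    intro j
    exact div_nonneg (pow_nonneg (hx n) _) (Nat.cast_nonneg _)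
  have hgev : ∀ᶠ n in atTop, g n ≤ q ^ n * (1 - c)⁻¹ := by
    have hev : ∀ᶠ n in atTop, x n / n < c := h.eventually_lt_const hac
    filter_upwards [hev, eventually_ge_atTop 1] with n hn1 hn2
    have hnpos : (0:ℝ) < n := by exact_mod_cast hn2
    have hxc : x n ≤ c * n := by
      rw [div_lt_iff₀ hnpos] at hn1
      linarith
    calc g n ≤ Real.exp (-(x n)) * ((x n ^ n / (Nat.factorial n)) * (1 - c)⁻¹) := by
          apply mul_le_mul_of_nonneg_left (tail_bound (hx n) hc0 hc1 hn2 hxc) (Real.exp_pos _).le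
      _ = (Real.exp (-(x n)) * (x n ^ n / (Nat.factorial n))) * (1 - c)⁻¹ := by ring
      _ ≤ ((x n / n) * Real.exp (1 - x n / n)) ^ n * (1 - c)⁻¹ := by
          apply mul_le_mul_of_nonneg_right (term_bound (hx n) hn2)
          rw [inv_nonneg]; linarith
      _ ≤ q ^ n * (1 - c)⁻¹ := by
          apply mul_le_mul_of_nonneg_right _ (by rw [inv_nonneg]; linarith)
          apply pow_le_pow_left₀ (mul_nonneg (div_nonneg (hx n) (Nat.cast_nonneg n)) (Real.exp_pos _).le)
          apply mono_te (div_nonneg (hx n) (Nat.cast_nonneg n)) _ hc1.le hc0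
          rw [div_le_iff₀ hnpos]
          linarith
  have hgz : Tendsto g atTop (nhds 0) := by
    have hb : Tendsto (fun n : ℕ => q ^ n * (1 - c)⁻¹) atTop (nhds 0) := by
      have := (tendsto_pow_atTop_nhds_zero_of_lt_one hq0 hq1).mul_const (1 - c)⁻¹
      simpa using this
    exact squeeze_zero' (Eventually.of_forall hg0) hgev hb
  have heq : ∀ n, Real.exp (-(x n)) * ∑ k ∈ Finset.range n, (x n) ^ k / (Nat.factorial k)
      = 1 - g n := by
    intro n
    have hr := remainder_eq (x n) n
    have : Real.exp (-(x n)) * Real.exp (x n) = 1 := by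
      rw [← Real.exp_add]; simp
    simp only [hg]
    nlinarith [Real.exp_pos (-(x n))]
  simp only [heq]
  simpa using tendsto_const_nhds.sub hgz

theorem bulk_limit_diag_overlap_k1 (z₀ lam : ℂ) (hz : ‖z₀‖ < 1) :
    Tendsto (fun N : ℕ =>
        (1 / (N : ℝ)) * ((1 / Real.pi) *
          fpolyR (N - 1) (‖(Real.sqrt N : ℂ) * z₀ + lam‖ ^ 2) *
          Real.exp (-(‖(Real.sqrt N : ℂ) * z₀ + lam‖ ^ 2))))
      atTop (nhds ((1 / Real.pi) * (1 - ‖z₀‖ ^ 2))) := by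
  set x : ℕ → ℝ := fun N => ‖(Real.sqrt N : ℂ) * z₀ + lam‖ ^ 2 with hxdef
  have hx0 : ∀ N, 0 ≤ x N := fun N => sq_nonneg _
  set a : ℝ := ‖z₀‖ ^ 2 with hadef
  have ha0 : 0 ≤ a := sq_nonneg _
  have ha1 : a < 1 := by
    have := norm_nonneg z₀
    nlinarith
  -- 1/√N → 0
  have hsq : Tendsto (fun N : ℕ => (Real.sqrt N)⁻¹) atTop (nhds 0) := by
    have h0 : Tendsto (fun N : ℕ => ((N:ℝ))⁻¹) atTop (nhds 0) :=
      tendsto_inv_atTop_zero.comp tendsto_natCast_atTop_atTop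
    have h1 := (Real.continuous_sqrt.tendsto 0).comp h0
    simp only [Function.comp_def, Real.sqrt_inv] at h1 ⊢
    simpa using h1
  -- x N / N → a
  have hlim : Tendsto (fun N => x N / N) atTop (nhds a) := by
    have hcont : Continuous (fun s : ℝ => ‖z₀ + (s:ℂ) * lam‖ ^ 2) := by
      continuity
    have h2 := (hcont.tendsto 0).comp hsq
    simp only [Function.comp_def, Complex.ofReal_zero, zero_mul, add_zero] at h2
    apply h2.congr'
    filter_upwards [eventually_ge_atTop 1] with N hN
    have hNpos : (0:ℝ) < N := by exact_mod_cast hN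
    have hs : (0:ℝ) < Real.sqrt N := Real.sqrt_pos.mpr hNpos
    have hfac : ((Real.sqrt N : ℂ)) * z₀ + lam = (Real.sqrt N : ℂ) * (z₀ + ((Real.sqrt N : ℝ)⁻¹ : ℝ) * lam) := by
      have : ((Real.sqrt N : ℂ)) ≠ 0 := Complex.ofReal_ne_zero.mpr hs.ne'
      rw [Complex.ofReal_inv, mul_add, ← mul_assoc, mul_inv_cancel₀ this, one_mul]
    have : x N = N * ‖z₀ + ((Real.sqrt N:ℝ)⁻¹ : ℝ) * lam‖ ^ 2 := by
      rw [hxdef]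
      simp only [hfac, norm_mul, mul_pow]
      congr 1
      rw [Complex.norm_real, Real.norm_eq_abs, abs_of_nonneg hs.le, Real.sq_sqrt hNpos.le]
    rw [this]
    field_simp
  -- limit for sum up to N
  have hA := key_tendsto x hx0 a ha1 hlim
  -- limit for sum up to N-1
  have hy : Tendsto (fun m : ℕ => x (m + 1) / m) atTop (nhds a) := by
    have h1 : Tendsto (fun m : ℕ => x (m + 1) / (m + 1)) atTop (nhds a) :=
      hlim.comp (tendsto_add_atTop_nat 1) |>.congr (fun m => by simp)
    have h2 : Tendsto (fun m : ℕ => ((m:ℝ) + 1) / m) atTop (nhds 1) := by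
      have h3 : Tendsto (fun m : ℕ => 1 + ((m:ℝ))⁻¹) atTop (nhds (1 + 0)) :=
        tendsto_const_nhds.add (tendsto_inv_atTop_zero.comp tendsto_natCast_atTop_atTop)
      apply (by simpa using h3 : Tendsto (fun m : ℕ => 1 + ((m:ℝ))⁻¹) atTop (nhds 1)).congr'
      filter_upwards [eventually_ge_atTop 1] with m hm
      have : (0:ℝ) < m := by exact_mod_cast hm
      field_simp
    have := h1.mul h2
    rw [mul_one] at this
    apply this.congr'
    filter_upwards [eventually_ge_atTop 1] with m hm
    have hm0 : ((m:ℝ)) ≠ 0 := by positivity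
    field_simp
  have hG := key_tendsto (fun m => x (m + 1)) (fun m => hx0 _) a ha1 hy
  have hB : Tendsto (fun N : ℕ =>
      Real.exp (-(x ((N - 1) + 1))) *
        ∑ k ∈ Finset.range (N - 1), (x ((N - 1) + 1)) ^ k / (Nat.factorial k))
      atTop (nhds 1) := hG.comp (tendsto_sub_atTop_nat 1)
  -- final assembly
  have hmain : Tendsto (fun N : ℕ =>
      (1 / Real.pi) * ((Real.exp (-(x N)) * ∑ k ∈ Finset.range N, (x N) ^ k / (Nat.factorial k))
        - (x N / N) * (Real.exp (-(x ((N - 1) + 1))) *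
          ∑ k ∈ Finset.range (N - 1), (x ((N - 1) + 1)) ^ k / (Nat.factorial k))))
      atTop (nhds ((1 / Real.pi) * (1 - a * 1))) :=
    (hA.sub (hlim.mul hB)).const_mul _
  rw [show (1 / Real.pi) * (1 - a * 1) = (1 / Real.pi) * (1 - a) by ring] at hmain
  apply hmain.congr'
  filter_upwards [eventually_ge_atTop 1] with N hN
  have hN1 : N - 1 + 1 = N := Nat.succ_pred_eq_of_pos hN
  have hNpos : (0:ℝ) < N := by exact_mod_cast hN
  rw [hN1]
  show _ = 1 / (N:ℝ) * (1 / Real.pi * fpolyR (N-1) (x N) * Real.exp (-(x N)))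
  rw [fpolyR, epolyR, hN1]
  have hcast : ((N - 1 : ℕ) : ℝ) + 1 = (N : ℝ) := by
    rw [Nat.cast_sub hN]; ring
  rw [hcast]
  field_simp
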